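/- arXiv:1812.02450 — 2 statements merged into one kernel-verified Lean document; each statement's English description precedes it below -/
import Mathlib

section
/- Let X, Y be real Banach spaces and N an absolute normalized norm on ℝ². If a, b ≥ 0 with N(a,b) = 1, x is a Δ-point of X and y is a Δ-point of Y, then (a·x, b·y) is a Δ-point of Z = X ⊕_N Y. Consequently, if X and Y both satisfy B_X = cl conv Δ_X and B_Y = cl conv Δ_Y, then B_Z = cl conv Δ_Z. -/
section Aux

variable (N : ℝ × ℝ → ℝ)
    (Ntri : ∀ u v : ℝ × ℝ, N (u + v) ≤ N u + N v)
    (Nhom : ∀ (t : ℝ) (u : ℝ × ℝ), N (t • u) = |t| * N u)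
    (Nabs : ∀ s t : ℝ, N (s, t) = N (|s|, |t|))

include Nhom in
lemma n_zero : N 0 = 0 := by
  have := Nhom 0 0; simpa using this

include Ntri Nhom in
lemma n_nonneg (u : ℝ × ℝ) : 0 ≤ N u := by
  have h1 : N (-u) = N u := by
    have := Nhom (-1) u; simpa using this
  have h2 := Ntri u (-u)
  simp only [add_neg_cancel] at h2
  rw [n_zero N Nhom, h1] at h2
  linarith

include Ntri Nhom Nabs in
lemma n_mono_left {s' s : ℝ} (t : ℝ) (h0 : 0 ≤ s') (h1 : s' ≤ s) :
    N (s', t) ≤ N (s, t) := by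
  rcases eq_or_lt_of_le (h0.trans h1) with h | hs
  · have : s' = 0 := le_antisymm (h1.trans h.symm.le) h0
    rw [this, ← h]
  · set l : ℝ := (s + s') / (2 * s) with hl
    have hl0 : 0 ≤ l := by positivity
    have hl1 : l ≤ 1 := by rw [hl, div_le_one (by linarith)]; linarith
    have hcomb : ((s' : ℝ), t) = l • ((s : ℝ), t) + (1 - l) • (-s, t) := by
      have hsne : s ≠ 0 := ne_of_gt hs
      refine Prod.ext ?_ ?_
      · show s' = l * s + (1 - l) * (-s)
        rw [hl]
        field_simp
        ring
      · show t = l * t + (1 - l) * t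
        ring
    have hneg : N (-s, t) = N (s, t) := by
      rw [Nabs (-s) t, Nabs s t, abs_neg]
    calc N (s', t) = N (l • ((s : ℝ), t) + (1 - l) • (-s, t)) := by rw [← hcomb]
      _ ≤ N (l • ((s : ℝ), t)) + N ((1 - l) • (-s, t)) := Ntri _ _
      _ = |l| * N (s, t) + |1 - l| * N (-s, t) := by rw [Nhom, Nhom]
      _ = l * N (s, t) + (1 - l) * N (s, t) := by
          rw [abs_of_nonneg hl0, abs_of_nonneg (by linarith), hneg]
      _ = N (s, t) := by ring

include Ntri Nhom Nabs in
lemma n_mono_right (s : ℝ) {t' t : ℝ} (h0 : 0 ≤ t') (h1 : t' ≤ t) :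
    N (s, t') ≤ N (s, t) := by
  rcases eq_or_lt_of_le (h0.trans h1) with h | ht
  · have : t' = 0 := le_antisymm (h1.trans h.symm.le) h0
    rw [this, ← h]
  · set l : ℝ := (t + t') / (2 * t) with hl
    have hl0 : 0 ≤ l := by positivity
    have hl1 : l ≤ 1 := by rw [hl, div_le_one (by linarith)]; linarith
    have hcomb : ((s : ℝ), t') = l • ((s : ℝ), t) + (1 - l) • (s, -t) := by
      have htne : t ≠ 0 := ne_of_gt ht
      refine Prod.ext ?_ ?_
      · show s = l * s + (1 - l) * s
        ring
      · show t' = l * t + (1 - l) * (-t)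
        rw [hl]
        field_simp
        ring
    have hneg : N (s, -t) = N (s, t) := by
      rw [Nabs s (-t), Nabs s t, abs_neg]
    calc N (s, t') = N (l • ((s : ℝ), t) + (1 - l) • (s, -t)) := by rw [← hcomb]
      _ ≤ N (l • ((s : ℝ), t)) + N ((1 - l) • (s, -t)) := Ntri _ _
      _ = |l| * N (s, t) + |1 - l| * N (s, -t) := by rw [Nhom, Nhom]
      _ = l * N (s, t) + (1 - l) * N (s, t) := by
          rw [abs_of_nonneg hl0, abs_of_nonneg (by linarith), hneg]
      _ = N (s, t) := by ring

include Ntri Nhom Nabs in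
lemma n_mono {s' s t' t : ℝ} (hs0 : 0 ≤ s') (hs : s' ≤ s) (ht0 : 0 ≤ t') (ht : t' ≤ t) :
    N (s', t') ≤ N (s, t) :=
  (n_mono_right N Ntri Nhom Nabs s' ht0 ht).trans (n_mono_left N Ntri Nhom Nabs t hs0 hs)

include Ntri Nhom in
lemma n_le_sum (s t : ℝ) (h1 : N (1,0) = 1) (h2 : N (0,1) = 1) : N (s, t) ≤ |s| + |t| := by
  have : ((s : ℝ), t) = s • ((1:ℝ), (0:ℝ)) + t • ((0:ℝ), (1:ℝ)) := by
    ext <;> simp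
  rw [this]
  calc N _ ≤ N (s • ((1:ℝ), (0:ℝ))) + N (t • ((0:ℝ), (1:ℝ))) := Ntri _ _
    _ = |s| * N (1,0) + |t| * N (0,1) := by rw [Nhom, Nhom]
    _ = |s| + |t| := by rw [h1, h2]; ring

include Ntri Nhom in
lemma n_continuous (h1 : N (1,0) = 1) (h2 : N (0,1) = 1) : Continuous N := by
  have key : ∀ u v : ℝ × ℝ, N u - N v ≤ |u.1 - v.1| + |u.2 - v.2| := by
    intro u v
    have := Ntri (u - v) v
    simp only [sub_add_cancel] at this
    have h3 : N (u - v) ≤ |u.1 - v.1| + |u.2 - v.2| := by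
      have : u - v = ((u.1 - v.1 : ℝ), (u.2 - v.2 : ℝ)) := rfl
      rw [this]
      exact n_le_sum N Ntri Nhom _ _ h1 h2
    linarith
  have lip : LipschitzWith 2 N := by
    apply LipschitzWith.of_dist_le_mul
    intro u v
    rw [Real.dist_eq, abs_sub_le_iff]
    constructor
    · refine (key u v).trans ?_
      rw [Prod.dist_eq]
      push_cast
      have e1 : |u.1 - v.1| = dist u.1 v.1 := (Real.dist_eq _ _).symm
      have e2 : |u.2 - v.2| = dist u.2 v.2 := (Real.dist_eq _ _).symm
      rw [e1, e2]
      have := le_max_left (dist u.1 v.1) (dist u.2 v.2)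
      have := le_max_right (dist u.1 v.1) (dist u.2 v.2)
      linarith
    · refine (key v u).trans ?_
      rw [Prod.dist_eq]
      push_cast
      have e1 : |v.1 - u.1| = dist u.1 v.1 := by rw [Real.dist_eq, abs_sub_comm]
      have e2 : |v.2 - u.2| = dist u.2 v.2 := by rw [Real.dist_eq, abs_sub_comm]
      rw [e1, e2]
      have := le_max_left (dist u.1 v.1) (dist u.2 v.2)
      have := le_max_right (dist u.1 v.1) (dist u.2 v.2)
      linarith
  exact lip.continuous

end Aux

-- product/image lemma
lemma map_pair_mem {Z : Type*} [NormedAddCommGroup Z] [NormedSpace ℝ Z]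
    {X Y : Type*} [NormedAddCommGroup X] [NormedSpace ℝ X]
    [NormedAddCommGroup Y] [NormedSpace ℝ Y]
    (f : (X × Y) →L[ℝ] Z) {S : Set X} {T : Set Y} {x : X} {y : Y}
    (hx : x ∈ closure (convexHull ℝ S)) (hy : y ∈ closure (convexHull ℝ T)) :
    f (x, y) ∈ closure (convexHull ℝ (f '' (S ×ˢ T))) := by
  have hxy : (x, y) ∈ closure (convexHull ℝ (S ×ˢ T)) := by
    rw [convexHull_prod, closure_prod_eq]
    exact ⟨hx, hy⟩
  have h1 : f (x, y) ∈ f '' closure (convexHull ℝ (S ×ˢ T)) := Set.mem_image_of_mem _ hxy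
  have h2 := image_closure_subset_closure_image (f.continuous) (s := convexHull ℝ (S ×ˢ T))
  have h3 := h2 h1
  have h4 := (f.toLinearMap).image_convexHull (S ×ˢ T)
  simp only [ContinuousLinearMap.coe_coe] at h4
  rwa [h4] at h3

lemma exists_clm {X Y Z : Type*}
    [NormedAddCommGroup X] [NormedSpace ℝ X]
    [NormedAddCommGroup Y] [NormedSpace ℝ Y]
    [NormedAddCommGroup Z] [NormedSpace ℝ Z]
    (N : ℝ × ℝ → ℝ)
    (Ntri : ∀ u v : ℝ × ℝ, N (u + v) ≤ N u + N v)
    (Nhom : ∀ (t : ℝ) (u : ℝ × ℝ), N (t • u) = |t| * N u)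
    (Nnorm₁ : N (1, 0) = 1) (Nnorm₂ : N (0, 1) = 1)
    (e : Z ≃ₗ[ℝ] X × Y)
    (hesymm : ∀ p : X × Y, ‖e.symm p‖ = N (‖p.1‖, ‖p.2‖))
    (a b : ℝ) :
    ∃ f : (X × Y) →L[ℝ] Z, ∀ p : X × Y, f p = e.symm (a • p.1, b • p.2) := by
  let L : (X × Y) →ₗ[ℝ] Z :=
    { toFun := fun p => e.symm (a • p.1, b • p.2),
      map_add' := fun p q => by
        have h : (a • (p + q).1, b • (p + q).2)
            = ((a • p.1, b • p.2) : X × Y) + (a • q.1, b • q.2) := by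
          simp [Prod.fst_add, Prod.snd_add, smul_add, Prod.mk_add_mk]
        simp only [h, map_add],
      map_smul' := fun t p => by
        have h : (a • (t • p).1, b • (t • p).2) = t • ((a • p.1, b • p.2) : X × Y) := by
          simp [Prod.smul_fst, Prod.smul_snd, Prod.smul_mk, smul_comm t a, smul_comm t b]
        simp only [h, map_smul, RingHom.id_apply] }
  have hb : ∀ p : X × Y, ‖L p‖ ≤ (|a| + |b|) * ‖p‖ := by
    intro p
    have h1 : ‖L p‖ = N (‖a • p.1‖, ‖b • p.2‖) := hesymm _
    have h2 : N (‖a • p.1‖, ‖b • p.2‖) ≤ |‖a • p.1‖| + |‖b • p.2‖| :=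
      n_le_sum N Ntri Nhom _ _ Nnorm₁ Nnorm₂
    rw [abs_of_nonneg (norm_nonneg _), abs_of_nonneg (norm_nonneg _),
      norm_smul, norm_smul, Real.norm_eq_abs, Real.norm_eq_abs] at h2
    have h3 : ‖p.1‖ ≤ ‖p‖ := norm_fst_le p
    have h4 : ‖p.2‖ ≤ ‖p‖ := norm_snd_le p
    have h5 : |a| * ‖p.1‖ ≤ |a| * ‖p‖ := mul_le_mul_of_nonneg_left h3 (abs_nonneg a)
    have h6 : |b| * ‖p.2‖ ≤ |b| * ‖p‖ := mul_le_mul_of_nonneg_left h4 (abs_nonneg b)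
    rw [h1, norm_smul, norm_smul, Real.norm_eq_abs, Real.norm_eq_abs]
    nlinarith [norm_nonneg p]
  exact ⟨L.mkContinuous (|a| + |b|) hb, fun p => rfl⟩

/-- The set of Δ-points of a real normed space. -/
def deltaPoints (X : Type*) [NormedAddCommGroup X] [NormedSpace ℝ X] : Set X :=
  {x : X | ‖x‖ = 1 ∧ ∀ ε > (0 : ℝ),
    x ∈ closure (convexHull ℝ {y : X | ‖y‖ ≤ 1 ∧ 2 - ε ≤ ‖x - y‖})}

set_option maxHeartbeats 1000000 in
/-- Let `N` be an absolute normalized norm on `ℝ²` and `Z = X ⊕_N Y`. If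
`a, b ≥ 0` with `N(a, b) = 1`, `x` is a Δ-point of `X` and `y` is a Δ-point of
`Y`, then `(a•x, b•y)` is a Δ-point of `Z`. Consequently, if `X` and `Y` have
the convex DLD2P, then so does `Z`. -/
theorem stmt_18 {X Y Z : Type*}
    [NormedAddCommGroup X] [NormedSpace ℝ X] [CompleteSpace X]
    [NormedAddCommGroup Y] [NormedSpace ℝ Y] [CompleteSpace Y]
    [NormedAddCommGroup Z] [NormedSpace ℝ Z] [CompleteSpace Z]
    (N : ℝ × ℝ → ℝ)
    -- `N` is a norm on `ℝ²`:
    (Ntri : ∀ u v : ℝ × ℝ, N (u + v) ≤ N u + N v)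
    (Nhom : ∀ (t : ℝ) (u : ℝ × ℝ), N (t • u) = |t| * N u)
    (Ndef : ∀ u : ℝ × ℝ, N u = 0 → u = 0)
    -- `N` is absolute and normalized:
    (Nabs : ∀ s t : ℝ, N (s, t) = N (|s|, |t|))
    (Nnorm₁ : N (1, 0) = 1) (Nnorm₂ : N (0, 1) = 1)
    -- `Z = X ⊕_N Y`:
    (e : Z ≃ₗ[ℝ] X × Y)
    (he : ∀ z : Z, ‖z‖ = N (‖(e z).1‖, ‖(e z).2‖)) :
    (∀ a b : ℝ, 0 ≤ a → 0 ≤ b → N (a, b) = 1 →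
      ∀ x ∈ deltaPoints X, ∀ y ∈ deltaPoints Y,
        e.symm (a • x, b • y) ∈ deltaPoints Z) ∧
    (Metric.closedBall (0 : X) 1 = closure (convexHull ℝ (deltaPoints X)) →
     Metric.closedBall (0 : Y) 1 = closure (convexHull ℝ (deltaPoints Y)) →
     Metric.closedBall (0 : Z) 1 = closure (convexHull ℝ (deltaPoints Z))) := by
  have hesymm : ∀ p : X × Y, ‖e.symm p‖ = N (‖p.1‖, ‖p.2‖) := by
    intro p
    rw [he (e.symm p), e.apply_symm_apply]
  have hf : ∀ a b : ℝ, ∃ f : (X × Y) →L[ℝ] Z,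
      ∀ p : X × Y, f p = e.symm (a • p.1, b • p.2) :=
    exists_clm N Ntri Nhom Nnorm₁ Nnorm₂ e hesymm
  have part1 : ∀ a b : ℝ, 0 ≤ a → 0 ≤ b → N (a, b) = 1 →
      ∀ x ∈ deltaPoints X, ∀ y ∈ deltaPoints Y,
        e.symm (a • x, b • y) ∈ deltaPoints Z := by
    intro a b ha hb hab x hx y hy
    obtain ⟨hx1, hx2⟩ := hx
    obtain ⟨hy1, hy2⟩ := hy
    constructor
    · rw [hesymm]
      simp only [norm_smul, Real.norm_eq_abs, abs_of_nonneg ha, abs_of_nonneg hb, hx1, hy1, mul_one]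
      exact hab
    · intro ε hε
      obtain ⟨f, hfdef⟩ := hf a b
      set z₀ := e.symm (a • x, b • y) with hz₀def
      have hz0 : z₀ = f (x, y) := by rw [hfdef]
      set S := {u : X | ‖u‖ ≤ 1 ∧ 2 - ε ≤ ‖x - u‖} with hS
      set T := {v : Y | ‖v‖ ≤ 1 ∧ 2 - ε ≤ ‖y - v‖} with hT
      have hmem := map_pair_mem f (hx2 ε hε) (hy2 ε hε)
      have hsub : f '' (S ×ˢ T) ⊆ {w : Z | ‖w‖ ≤ 1 ∧ 2 - ε ≤ ‖z₀ - w‖} := by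
        rintro _ ⟨⟨u, v⟩, ⟨⟨hu1, hu2⟩, ⟨hv1, hv2⟩⟩, rfl⟩
        rw [hfdef]
        constructor
        · rw [hesymm]
          have hnu : ‖a • (u : X)‖ = a * ‖u‖ := by rw [norm_smul, Real.norm_eq_abs, abs_of_nonneg ha]
          have hnv : ‖b • (v : Y)‖ = b * ‖v‖ := by rw [norm_smul, Real.norm_eq_abs, abs_of_nonneg hb]
          calc N (‖a • (u : X)‖, ‖b • (v : Y)‖) = N (a * ‖u‖, b * ‖v‖) := by rw [hnu, hnv]
            _ ≤ N (a, b) := n_mono N Ntri Nhom Nabs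
                (by positivity) (by nlinarith) (by positivity) (by nlinarith)
            _ = 1 := hab
        · have hdiff : z₀ - e.symm (a • (u : X), b • (v : Y))
              = e.symm (a • (x - u), b • (y - v)) := by
            rw [hz₀def, ← map_sub]
            congr 1
            rw [Prod.mk_sub_mk, smul_sub, smul_sub]
          rw [hdiff, hesymm]
          rcases le_or_gt (2 - ε) 0 with h | h
          · exact h.trans (n_nonneg N Ntri Nhom _)
          · have hnu : ‖a • (x - u)‖ = a * ‖x - u‖ := by rw [norm_smul, Real.norm_eq_abs, abs_of_nonneg ha]
            have hnv : ‖b • (y - v)‖ = b * ‖y - v‖ := by rw [norm_smul, Real.norm_eq_abs, abs_of_nonneg hb]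
            have hsc : ((2 - ε) * a, (2 - ε) * b) = (2 - ε) • ((a : ℝ), b) := by
              simp [Prod.smul_mk, smul_eq_mul]
            calc (2 : ℝ) - ε = N ((2 - ε) * a, (2 - ε) * b) := by
                  rw [hsc, Nhom, hab, abs_of_pos h, mul_one]
              _ ≤ N (‖a • (x - u)‖, ‖b • (y - v)‖) := by
                  rw [hnu, hnv]
                  exact n_mono N Ntri Nhom Nabs (by positivity) (by nlinarith)
                    (by positivity) (by nlinarith)
      rw [← hz0] at hmem
      exact closure_mono (convexHull_mono hsub) hmem
  refine ⟨part1, ?_⟩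
  intro hBX hBY
  apply Set.Subset.antisymm
  · intro z hz
    rw [Metric.mem_closedBall, dist_zero_right] at hz
    set p := (e z).1 with hp
    set q := (e z).2 with hq
    have hzn : N (‖p‖, ‖q‖) ≤ 1 := by rw [← he]; exact hz
    -- find r with N(‖p‖+r, ‖q‖+r) = 1
    have hcont : ContinuousOn (fun r : ℝ => N (‖p‖ + r, ‖q‖ + r)) (Set.Icc 0 1) := by
      apply Continuous.continuousOn
      exact (n_continuous N Ntri Nhom Nnorm₁ Nnorm₂).comp ((continuous_const.add continuous_id).prodMk (continuous_const.add continuous_id))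
    have hup : (1 : ℝ) ≤ N (‖p‖ + 1, ‖q‖ + 1) := by
      calc (1 : ℝ) = N (1, 0) := Nnorm₁.symm
        _ ≤ N (‖p‖ + 1, ‖q‖ + 1) := n_mono N Ntri Nhom Nabs (by norm_num)
            (by nlinarith [norm_nonneg p]) (le_refl 0) (by positivity)
    have hIVT := intermediate_value_Icc (by norm_num : (0:ℝ) ≤ 1) hcont
    have h1mem : (1 : ℝ) ∈ Set.Icc (N (‖p‖ + 0, ‖q‖ + 0)) (N (‖p‖ + 1, ‖q‖ + 1)) := by
      constructor
      · simpa using hzn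
      · exact hup
    obtain ⟨r, hrIcc, hr⟩ := hIVT h1mem
    set a := ‖p‖ + r with hadef
    set b := ‖q‖ + r with hbdef
    have hr0 : 0 ≤ r := hrIcc.1
    have ha : 0 ≤ a := by positivity
    have hb : 0 ≤ b := by positivity
    have hab : N (a, b) = 1 := hr
    have hpa : ‖p‖ ≤ a := by rw [hadef]; linarith
    have hqb : ‖q‖ ≤ b := by rw [hbdef]; linarith
    -- choose x', y'
    obtain ⟨x', hx'n, hax'⟩ : ∃ x' : X, ‖x'‖ ≤ 1 ∧ a • x' = p := by
      by_cases ha0 : a = 0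
      · refine ⟨0, by simp, ?_⟩
        have : ‖p‖ = 0 := le_antisymm (hpa.trans_eq ha0) (norm_nonneg p)
        simp [norm_eq_zero.mp this]
      · have hapos : 0 < a := lt_of_le_of_ne ha (Ne.symm ha0)
        refine ⟨a⁻¹ • p, ?_, ?_⟩
        · rw [norm_smul, Real.norm_eq_abs, abs_of_nonneg (inv_nonneg.mpr ha)]
          rw [inv_mul_le_iff₀ hapos, mul_one]
          exact hpa
        · rw [smul_smul, mul_inv_cancel₀ ha0, one_smul]
    obtain ⟨y', hy'n, hby'⟩ : ∃ y' : Y, ‖y'‖ ≤ 1 ∧ b • y' = q := by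
      by_cases hb0 : b = 0
      · refine ⟨0, by simp, ?_⟩
        have : ‖q‖ = 0 := le_antisymm (hqb.trans_eq hb0) (norm_nonneg q)
        simp [norm_eq_zero.mp this]
      · have hbpos : 0 < b := lt_of_le_of_ne hb (Ne.symm hb0)
        refine ⟨b⁻¹ • q, ?_, ?_⟩
        · rw [norm_smul, Real.norm_eq_abs, abs_of_nonneg (inv_nonneg.mpr hb)]
          rw [inv_mul_le_iff₀ hbpos, mul_one]
          exact hqb
        · rw [smul_smul, mul_inv_cancel₀ hb0, one_smul]
    have hx'mem : x' ∈ closure (convexHull ℝ (deltaPoints X)) := by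
      rw [← hBX, Metric.mem_closedBall, dist_zero_right]; exact hx'n
    have hy'mem : y' ∈ closure (convexHull ℝ (deltaPoints Y)) := by
      rw [← hBY, Metric.mem_closedBall, dist_zero_right]; exact hy'n
    obtain ⟨f, hfdef⟩ := hf a b
    have hz' : z = f (x', y') := by
      rw [hfdef]
      simp only [hax', hby']
      rw [hp, hq]
      exact (e.symm_apply_apply z).symm
    have hmem := map_pair_mem f hx'mem hy'mem
    have hsub : f '' (deltaPoints X ×ˢ deltaPoints Y) ⊆ deltaPoints Z := by
      rintro _ ⟨⟨x, y⟩, ⟨hxd, hyd⟩, rfl⟩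
      rw [hfdef]
      exact part1 a b ha hb hab x hxd y hyd
    rw [hz']
    exact closure_mono (convexHull_mono hsub) hmem
  · have h1 : deltaPoints Z ⊆ Metric.closedBall 0 1 := by
      intro w hw
      rw [Metric.mem_closedBall, dist_zero_right, hw.1]
    exact closure_minimal (convexHull_min h1 (convex_closedBall _ _)) Metric.isClosed_closedBall
end

section
/- Let Λ = (λ_n) satisfy 0 = λ₀ < λ₁ < ⋯ with Σ 1/λ_n < ∞. For all ε > 0 and δ > 0 there exist natural numbers k < l such that the function f(t) = (t^{λ_k} − t^{λ_l}) / ‖t^{λ_k} − t^{λ_l}‖∞ on [0,1] satisfies f ≥ 0 on [0,1] and f(t) < δ for all t ∈ [0, 1−ε]. -/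
open Filter Real Topology

/-- Spike functions in Müntz spaces: if `0 = λ₀ < λ₁ < ⋯` with `∑ 1/λₙ < ∞`,
then for all `ε, δ > 0` there are `k < l` such that the normalized function
`f(t) = (t^{λ_k} - t^{λ_l}) / ‖t^{λ_k} - t^{λ_l}‖∞` satisfies `f ≥ 0` on
`[0, 1]` and `f < δ` on `[0, 1 - ε]`. -/
theorem stmt_19 (Λ : ℕ → ℝ) (h0 : Λ 0 = 0) (hmono : StrictMono Λ)
    (hsum : Summable fun n => (Λ n)⁻¹)
    (ε δ : ℝ) (hε : 0 < ε) (hδ : 0 < δ) :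
    ∃ k l : ℕ, k < l ∧
      ∀ M : ℝ, M = sSup ((fun t : ℝ => |t ^ Λ k - t ^ Λ l|) '' Set.Icc (0 : ℝ) 1) →
        (∀ t ∈ Set.Icc (0 : ℝ) 1, 0 ≤ (t ^ Λ k - t ^ Λ l) / M) ∧
        (∀ t ∈ Set.Icc (0 : ℝ) (1 - ε), (t ^ Λ k - t ^ Λ l) / M < δ) := by
  have hpos : ∀ n, 1 ≤ n → 0 < Λ n := fun n hn => h0 ▸ hmono (by omega : 0 < n)
  have hinv0 : Tendsto (fun n => (Λ n)⁻¹) atTop (𝓝 0) := hsum.tendsto_atTop_zero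
  have hΛtop : Tendsto Λ atTop atTop := by
    have h1 : Tendsto (fun n => (Λ n)⁻¹) atTop (𝓝[>] 0) := by
      apply tendsto_nhdsWithin_of_tendsto_nhds_of_eventually_within _ hinv0
      filter_upwards [eventually_ge_atTop 1] with n hn
      exact inv_pos.2 (hpos n hn)
    have := tendsto_inv_nhdsGT_zero.comp h1
    refine this.congr fun n => ?_
    simp [Function.comp]
  set c : ℝ := max (1 - ε) 0 with hc
  have hc0 : 0 ≤ c := le_max_right _ _
  have hc1 : c < 1 := by
    apply max_lt (by linarith) one_pos
  set t0 : ℝ := (1 + c) / 2 with ht0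
  have ht0pos : 0 < t0 := by positivity
  have ht01 : t0 < 1 := by simp only [ht0]; linarith
  have hct0 : c < t0 := by simp only [ht0]; linarith
  set r : ℝ := c / t0 with hr
  have hr0 : 0 ≤ r := div_nonneg hc0 ht0pos.le
  have hr1 : r < 1 := (div_lt_one ht0pos).2 hct0
  have htr : Tendsto (fun n => r ^ Λ n) atTop (𝓝 0) :=
    (tendsto_rpow_atTop_of_base_lt_one r (by linarith) hr1).comp hΛtop
  obtain ⟨k, hkδ, hk1⟩ := ((htr.eventually_lt_const (half_pos hδ)).and
    (eventually_ge_atTop 1)).exists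
  have htt0 : Tendsto (fun n => t0 ^ Λ n) atTop (𝓝 0) :=
    (tendsto_rpow_atTop_of_base_lt_one t0 (by linarith) ht01).comp hΛtop
  have ht0k : (0:ℝ) < t0 ^ Λ k := rpow_pos_of_pos ht0pos _
  obtain ⟨l, hl, hkl⟩ := ((htt0.eventually_lt_const (half_pos ht0k)).and
    (eventually_gt_atTop k)).exists
  refine ⟨k, l, hkl, ?_⟩
  intro M hM
  have hΛkl : Λ k ≤ Λ l := (hmono hkl).le
  have hΛk : 0 < Λ k := hpos k hk1
  have hΛl : 0 < Λ l := hΛk.trans_le hΛkl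
  -- nonnegativity of the difference on [0,1]
  have hdiff : ∀ t ∈ Set.Icc (0:ℝ) 1, 0 ≤ t ^ Λ k - t ^ Λ l := by
    rintro t ⟨ht0', ht1⟩
    rcases eq_or_lt_of_le ht0' with h | h
    · simp [← h, zero_rpow hΛk.ne', zero_rpow hΛl.ne']
    · have := rpow_le_rpow_of_exponent_ge h ht1 hΛkl
      linarith
  -- bounded above
  have hbdd : BddAbove ((fun t : ℝ => |t ^ Λ k - t ^ Λ l|) '' Set.Icc (0 : ℝ) 1) := by
    refine ⟨1, ?_⟩
    rintro _ ⟨t, ⟨ht0', ht1⟩, rfl⟩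
    have h1 : t ^ Λ k ≤ 1 := rpow_le_one ht0' ht1 hΛk.le
    have h2 : t ^ Λ l ≤ 1 := rpow_le_one ht0' ht1 hΛl.le
    have h3 : 0 ≤ t ^ Λ k := rpow_nonneg ht0' _
    have h4 : 0 ≤ t ^ Λ l := rpow_nonneg ht0' _
    rw [abs_le]; constructor <;> linarith
  have ht0mem : t0 ∈ Set.Icc (0:ℝ) 1 := ⟨ht0pos.le, ht01.le⟩
  have hMge : t0 ^ Λ k - t0 ^ Λ l ≤ M := by
    rw [hM]
    have : |t0 ^ Λ k - t0 ^ Λ l| = t0 ^ Λ k - t0 ^ Λ l :=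
      abs_of_nonneg (hdiff t0 ht0mem)
    exact this ▸ le_csSup hbdd ⟨t0, ht0mem, rfl⟩
  have hMpos : 0 < M := by
    have : t0 ^ Λ k / 2 < t0 ^ Λ k - t0 ^ Λ l := by linarith
    linarith
  constructor
  · intro t ht
    exact div_nonneg (hdiff t ht) hMpos.le
  · rintro t ⟨ht0', ht1⟩
    have htc : t ≤ c := ht1.trans (le_max_left _ _)
    have h1 : t ^ Λ k ≤ c ^ Λ k := rpow_le_rpow ht0' htc hΛk.le
    have h2 : c ^ Λ k = r ^ Λ k * t0 ^ Λ k := by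
      rw [← mul_rpow hr0 ht0pos.le, hr, div_mul_cancel₀ _ ht0pos.ne']
    have h3 : c ^ Λ k < (δ / 2) * t0 ^ Λ k := by
      rw [h2]
      exact mul_lt_mul_of_pos_right hkδ ht0k
    have h4 : 0 ≤ t ^ Λ l := rpow_nonneg ht0' _
    rw [div_lt_iff₀ hMpos]
    nlinarith [hMge, hl]
end
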